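/- arXiv:1605.01804 — 2 statements merged into one kernel-verified Lean document; each statement's English description precedes it below -/
import Mathlib

section
/- Let α > 0 and let t ↦ v(t) be a continuously differentiable map from an open interval I ⊆ ℝ into the Schwartz space 𝒮(ℝ²;ℂ). Set u(t) = B(|v(t)|²). Then for every t ∈ I, Re ∫_{ℝ²} u(t) v(t) ∂_t v̄(t) dx dy = (1/4) d/dt ∫_{ℝ²} u(t) |v(t)|² dx dy. -/
noncomputable section
open MeasureTheory Complex SchwartzMap FourierTransform Filter
open scoped ENNReal Topology

abbrev Plane : Type := EuclideanSpace ℝ (Fin 2)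

/-- Symbol of the Helmholtz inverse `B = (Id - α²Δ)⁻¹`. -/
def mB (α : ℝ) (ξ : Plane) : ℂ := ((1 + α ^ 2 * ‖ξ‖ ^ 2)⁻¹ : ℝ)

/-- The Fourier multiplier with symbol `m`, realized pointwise via the (inverse) Fourier
integral; this is well defined whenever `m ⬝ 𝓕 f ∈ L¹`. -/
def mult (m : Plane → ℂ) (f : Plane → ℂ) : Plane → ℂ :=
  𝓕⁻ (fun ξ => m ξ * 𝓕 f ξ : Plane → ℂ)

open scoped RealInnerProductSpace

namespace Helper

lemma mB_pos_den (α : ℝ) (ξ : Plane) : (0:ℝ) < 1 + α ^ 2 * ‖ξ‖ ^ 2 := by positivity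

lemma mB_cont (α : ℝ) : Continuous (mB α) := by
  refine Complex.continuous_ofReal.comp ?_
  exact ((continuous_const.add ((continuous_const).mul ((continuous_norm).pow 2))).inv₀
    (fun ξ => (mB_pos_den α ξ).ne'))

lemma mB_norm_le_one (α : ℝ) (ξ : Plane) : ‖mB α ξ‖ ≤ 1 := by
  rw [mB, Complex.norm_real, Real.norm_eq_abs,
    _root_.abs_of_nonneg (inv_nonneg.2 (mB_pos_den α ξ).le)]
  have h1 : (1:ℝ) ≤ 1 + α ^ 2 * ‖ξ‖ ^ 2 := by nlinarith [sq_nonneg (α * ‖ξ‖), sq_nonneg α, sq_nonneg ‖ξ‖, mul_nonneg (sq_nonneg α) (sq_nonneg ‖ξ‖)]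
  calc (1 + α ^ 2 * ‖ξ‖ ^ 2)⁻¹ ≤ 1⁻¹ := by
        exact inv_anti₀ one_pos h1
    _ = 1 := inv_one

lemma mB_neg (α : ℝ) (ξ : Plane) : mB α (-ξ) = mB α ξ := by simp [mB]

lemma mB_conj (α : ℝ) (ξ : Plane) : (starRingEnd ℂ) (mB α ξ) = mB α ξ := by
  simp [mB, Complex.conj_ofReal]

/-- the real-bilinear map `(z, w) ↦ z * conj w`. -/
def cmul : ℂ →L[ℝ] ℂ →L[ℝ] ℂ :=
  (ContinuousLinearMap.mul ℝ ℂ).bilinearComp (ContinuousLinearMap.id ℝ ℂ)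
    (Complex.conjCLE.toContinuousLinearMap)

@[simp] lemma cmul_apply (z w : ℂ) : cmul z w = z * (starRingEnd ℂ) w := rfl

lemma schwartz_hasTemperateGrowth (f : 𝓢(Plane, ℂ)) : Function.HasTemperateGrowth ⇑f := by
  refine ⟨f.smooth', fun n => ⟨0, SchwartzMap.seminorm ℝ 0 n f, fun x => ?_⟩⟩
  simpa using SchwartzMap.norm_iteratedFDeriv_le_seminorm ℝ f n x

/-- pointwise product `x ↦ a x * conj (b x)` as a Schwartz map. -/
def P (a b : 𝓢(Plane, ℂ)) : 𝓢(Plane, ℂ) :=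
  SchwartzMap.bilinLeftCLM cmul (schwartz_hasTemperateGrowth b) a

@[simp] lemma P_apply (a b : 𝓢(Plane, ℂ)) (x : Plane) :
    P a b x = a x * (starRingEnd ℂ) (b x) := rfl

end Helper

namespace Helper

abbrev sem : SeminormFamily ℝ 𝓢(Plane, ℂ) (ℕ × ℕ) := schwartzSeminormFamily ℝ Plane ℂ

lemma P_add_right (a b b' : 𝓢(Plane, ℂ)) : P a (b + b') = P a b + P a b' := by
  ext x; simp [mul_add]

lemma P_sub_right (a b b' : 𝓢(Plane, ℂ)) : P a (b - b') = P a b - P a b' := by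
  ext x; simp [mul_sub]

lemma P_smul_right (r : ℝ) (a b : 𝓢(Plane, ℂ)) : P a (r • b) = r • P a b := by
  ext x
  simp only [P_apply, SchwartzMap.smul_apply]
  rw [real_smul, real_smul, map_mul, Complex.conj_ofReal]
  ring

lemma P_sub_left (a a' b : 𝓢(Plane, ℂ)) : P (a - a') b = P a b - P a' b := by
  ext x; simp [sub_mul]

lemma P_smul_left (r : ℝ) (a b : 𝓢(Plane, ℂ)) : P (r • a) b = r • P a b := by
  ext x
  simp only [P_apply, SchwartzMap.smul_apply]
  rw [real_smul, real_smul]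
  ring

lemma seminorm_P_le (k n : ℕ) (a b : 𝓢(Plane, ℂ)) :
    SchwartzMap.seminorm ℝ k n (P a b) ≤
      ‖cmul‖ * ∑ i ∈ Finset.range (n + 1),
        (n.choose i : ℝ) * (SchwartzMap.seminorm ℝ k i a * SchwartzMap.seminorm ℝ 0 (n - i) b) := by
  have hnn : (0:ℝ) ≤ ‖cmul‖ * ∑ i ∈ Finset.range (n + 1),
      (n.choose i : ℝ) * (SchwartzMap.seminorm ℝ k i a * SchwartzMap.seminorm ℝ 0 (n - i) b) := by
    refine mul_nonneg (ContinuousLinearMap.opNorm_nonneg _) (Finset.sum_nonneg fun i _ => ?_)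
    positivity
  refine SchwartzMap.seminorm_le_bound ℝ k n _ hnn fun x => ?_
  have hcoe : ⇑(P a b) = fun y => cmul (a y) (b y) := rfl
  have hb := ContinuousLinearMap.norm_iteratedFDeriv_le_of_bilinear cmul a.smooth' b.smooth'
      x (n := n) (by exact_mod_cast le_top)
  rw [hcoe]
  calc ‖x‖ ^ k * ‖iteratedFDeriv ℝ n (fun y => cmul (a y) (b y)) x‖
      ≤ ‖x‖ ^ k * (‖cmul‖ * ∑ i ∈ Finset.range (n + 1),
          (n.choose i : ℝ) * ‖iteratedFDeriv ℝ i (⇑a) x‖ * ‖iteratedFDeriv ℝ (n - i) (⇑b) x‖) := by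
        exact mul_le_mul_of_nonneg_left hb (by positivity)
    _ = ‖cmul‖ * ∑ i ∈ Finset.range (n + 1),
          (n.choose i : ℝ) * (‖x‖ ^ k * ‖iteratedFDeriv ℝ i (⇑a) x‖)
            * ‖iteratedFDeriv ℝ (n - i) (⇑b) x‖ := by
        simp only [Finset.mul_sum]
        exact Finset.sum_congr rfl fun i _ => by ring
    _ ≤ ‖cmul‖ * ∑ i ∈ Finset.range (n + 1),
          (n.choose i : ℝ) * (SchwartzMap.seminorm ℝ k i a * SchwartzMap.seminorm ℝ 0 (n - i) b) := by
        refine mul_le_mul_of_nonneg_left (Finset.sum_le_sum fun i _ => ?_) (ContinuousLinearMap.opNorm_nonneg _)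
        rw [mul_assoc]
        refine mul_le_mul_of_nonneg_left ?_ (by positivity)
        refine mul_le_mul (SchwartzMap.le_seminorm ℝ k i a x)
          (SchwartzMap.norm_iteratedFDeriv_le_seminorm ℝ b (n - i) x)
          (norm_nonneg _) (apply_nonneg _ _)

end Helper

namespace Helper

variable {γ : Type*} {l : Filter γ}

lemma tendsto_sem_zero {u : γ → 𝓢(Plane, ℂ)} {y : 𝓢(Plane, ℂ)}
    (h : Tendsto u l (𝓝 y)) (i : ℕ × ℕ) :
    Tendsto (fun x => sem i (u x - y)) l (𝓝 0) := by
  have h' := ((schwartz_withSeminorms ℝ Plane ℂ).tendsto_nhds u y).mp h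
  rw [Metric.tendsto_nhds]
  intro ε hε
  filter_upwards [h' i ε hε] with x hx
  rw [Real.dist_eq, sub_zero, _root_.abs_of_nonneg (apply_nonneg (sem i) _)]
  exact hx

lemma tendsto_of_sem_zero {u : γ → 𝓢(Plane, ℂ)}
    (h : ∀ i : ℕ × ℕ, Tendsto (fun x => sem i (u x)) l (𝓝 0)) :
    Tendsto u l (𝓝 0) := by
  refine ((schwartz_withSeminorms ℝ Plane ℂ).tendsto_nhds u 0).mpr fun i ε hε => ?_
  have := (Metric.tendsto_nhds.mp (h i)) ε hε
  filter_upwards [this] with x hx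
  rw [Real.dist_eq, sub_zero, _root_.abs_of_nonneg (apply_nonneg (sem i) _)] at hx
  simpa using hx

lemma tendsto_sem {u : γ → 𝓢(Plane, ℂ)} {y : 𝓢(Plane, ℂ)}
    (h : Tendsto u l (𝓝 y)) (i : ℕ × ℕ) :
    Tendsto (fun x => sem i (u x)) l (𝓝 (sem i y)) := by
  have h0 : Tendsto (fun x => sem i (u x) - sem i y) l (𝓝 0) := by
    refine squeeze_zero_norm (fun x => ?_) (tendsto_sem_zero h i)
    exact (sem i).norm_sub_map_le_sub (u x) y
  have := h0.add (tendsto_const_nhds (x := sem i y))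
  simpa using this

lemma tendsto_P_zero_left {A B : γ → 𝓢(Plane, ℂ)} {b : 𝓢(Plane, ℂ)}
    (hA : Tendsto A l (𝓝 0)) (hB : Tendsto B l (𝓝 b)) :
    Tendsto (fun x => P (A x) (B x)) l (𝓝 0) := by
  refine tendsto_of_sem_zero fun i => ?_
  have hbound : ∀ x, sem i (P (A x) (B x)) ≤
      ‖cmul‖ * ∑ j ∈ Finset.range (i.2 + 1), (i.2.choose j : ℝ) *
        (SchwartzMap.seminorm ℝ i.1 j (A x) * SchwartzMap.seminorm ℝ 0 (i.2 - j) (B x)) := by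
    intro x
    exact seminorm_P_le i.1 i.2 (A x) (B x)
  have hlim : Tendsto (fun x => ‖cmul‖ * ∑ j ∈ Finset.range (i.2 + 1), (i.2.choose j : ℝ) *
      (SchwartzMap.seminorm ℝ i.1 j (A x) * SchwartzMap.seminorm ℝ 0 (i.2 - j) (B x))) l
      (𝓝 0) := by
    have : Tendsto (fun x => ∑ j ∈ Finset.range (i.2 + 1), (i.2.choose j : ℝ) *
        (SchwartzMap.seminorm ℝ i.1 j (A x) * SchwartzMap.seminorm ℝ 0 (i.2 - j) (B x))) l
        (𝓝 (∑ j ∈ Finset.range (i.2 + 1), (i.2.choose j : ℝ) *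
          (0 * SchwartzMap.seminorm ℝ 0 (i.2 - j) b))) := by
      refine tendsto_finset_sum _ fun j _ => Tendsto.const_mul _ (Tendsto.mul ?_ ?_)
      · simpa using tendsto_sem_zero hA (i.1, j)
      · exact tendsto_sem hB (0, i.2 - j)
    simpa using this.const_mul ‖cmul‖
  exact squeeze_zero (fun x => apply_nonneg _ _) hbound hlim

lemma tendsto_P_zero_right {A B : γ → 𝓢(Plane, ℂ)} {a : 𝓢(Plane, ℂ)}
    (hA : Tendsto A l (𝓝 a)) (hB : Tendsto B l (𝓝 0)) :
    Tendsto (fun x => P (A x) (B x)) l (𝓝 0) := by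
  refine tendsto_of_sem_zero fun i => ?_
  have hbound : ∀ x, sem i (P (A x) (B x)) ≤
      ‖cmul‖ * ∑ j ∈ Finset.range (i.2 + 1), (i.2.choose j : ℝ) *
        (SchwartzMap.seminorm ℝ i.1 j (A x) * SchwartzMap.seminorm ℝ 0 (i.2 - j) (B x)) := by
    intro x
    exact seminorm_P_le i.1 i.2 (A x) (B x)
  have hlim : Tendsto (fun x => ‖cmul‖ * ∑ j ∈ Finset.range (i.2 + 1), (i.2.choose j : ℝ) *
      (SchwartzMap.seminorm ℝ i.1 j (A x) * SchwartzMap.seminorm ℝ 0 (i.2 - j) (B x))) l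
      (𝓝 0) := by
    have : Tendsto (fun x => ∑ j ∈ Finset.range (i.2 + 1), (i.2.choose j : ℝ) *
        (SchwartzMap.seminorm ℝ i.1 j (A x) * SchwartzMap.seminorm ℝ 0 (i.2 - j) (B x))) l
        (𝓝 (∑ j ∈ Finset.range (i.2 + 1), (i.2.choose j : ℝ) *
          (SchwartzMap.seminorm ℝ i.1 j a * 0))) := by
      refine tendsto_finset_sum _ fun j _ => Tendsto.const_mul _ (Tendsto.mul ?_ ?_)
      · exact tendsto_sem hA (i.1, j)
      · simpa using tendsto_sem_zero hB (0, i.2 - j)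
    simpa using this.const_mul ‖cmul‖
  exact squeeze_zero (fun x => apply_nonneg _ _) hbound hlim

lemma tendsto_P {A B : γ → 𝓢(Plane, ℂ)} {a b : 𝓢(Plane, ℂ)}
    (hA : Tendsto A l (𝓝 a)) (hB : Tendsto B l (𝓝 b)) :
    Tendsto (fun x => P (A x) (B x)) l (𝓝 (P a b)) := by
  have h1 : Tendsto (fun x => P (A x - a) (B x)) l (𝓝 0) :=
    tendsto_P_zero_left (by simpa using hA.sub (tendsto_const_nhds (x := a))) hB
  have h2 : Tendsto (fun x => P a (B x - b)) l (𝓝 0) :=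
    tendsto_P_zero_right (tendsto_const_nhds (x := a))
      (by simpa using hB.sub (tendsto_const_nhds (x := b)))
  have heq : (fun x => P (A x) (B x)) =
      fun x => (P (A x - a) (B x) + P a (B x - b)) + P a b := by
    funext x
    rw [P_sub_left, P_sub_right]
    abel
  rw [heq]
  have := (h1.add h2).add (tendsto_const_nhds (x := P a b))
  simpa using this

end Helper

namespace Helper

/-- Fourier transform on Schwartz space. -/
def FT (g : 𝓢(Plane, ℂ)) : 𝓢(Plane, ℂ) := SchwartzMap.fourierTransformCLM ℝ g

lemma FT_coe (g : 𝓢(Plane, ℂ)) : ⇑(FT g) = 𝓕 (⇑g : Plane → ℂ) := by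
  simp [FT, SchwartzMap.fourier_coe]

/-- The fundamental bilinear pairing. -/
def S (α : ℝ) (g k : 𝓢(Plane, ℂ)) : ℂ :=
  ∫ ξ, (mB α ξ * FT g ξ) * FT k (-ξ)

lemma S_integrand_integrable (α : ℝ) (g k : 𝓢(Plane, ℂ)) :
    Integrable (fun ξ => (mB α ξ * FT g ξ) * FT k (-ξ)) := by
  have h1 : Integrable (fun ξ => (mB α ξ * FT k (-ξ)) * FT g ξ) := by
    refine Integrable.bdd_mul (c := 1 * SchwartzMap.seminorm ℝ 0 0 (FT k))
      (FT g).integrable ?_ ?_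
    · exact ((mB_cont α).mul ((FT k).continuous.comp continuous_neg)).aestronglyMeasurable
    · refine Filter.Eventually.of_forall fun ξ => ?_
      rw [norm_mul]
      exact mul_le_mul (mB_norm_le_one α ξ) (SchwartzMap.norm_le_seminorm ℝ (FT k) (-ξ))
        (norm_nonneg _) zero_le_one
  exact h1.congr (Filter.Eventually.of_forall fun ξ => by ring)

end Helper

namespace Helper

lemma S_sub_left (α : ℝ) (g g' k : 𝓢(Plane, ℂ)) :
    S α (g - g') k = S α g k - S α g' k := by
  rw [S, S, S, ← integral_sub (S_integrand_integrable α g k) (S_integrand_integrable α g' k)]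
  congr 1
  funext ξ
  have : FT (g - g') ξ = FT g ξ - FT g' ξ := by simp [FT, -SchwartzMap.fourierTransformCLM_apply]
  rw [this]; ring

lemma S_sub_right (α : ℝ) (g k k' : 𝓢(Plane, ℂ)) :
    S α g (k - k') = S α g k - S α g k' := by
  rw [S, S, S, ← integral_sub (S_integrand_integrable α g k) (S_integrand_integrable α g k')]
  congr 1
  funext ξ
  have : FT (k - k') (-ξ) = FT k (-ξ) - FT k' (-ξ) := by simp [FT, -SchwartzMap.fourierTransformCLM_apply]
  rw [this]; ring

lemma S_add_left (α : ℝ) (g g' k : 𝓢(Plane, ℂ)) :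
    S α (g + g') k = S α g k + S α g' k := by
  rw [S, S, S, ← integral_add (S_integrand_integrable α g k) (S_integrand_integrable α g' k)]
  congr 1
  funext ξ
  have : FT (g + g') ξ = FT g ξ + FT g' ξ := by simp [FT]
  rw [this]; ring

lemma S_add_right (α : ℝ) (g k k' : 𝓢(Plane, ℂ)) :
    S α g (k + k') = S α g k + S α g k' := by
  rw [S, S, S, ← integral_add (S_integrand_integrable α g k) (S_integrand_integrable α g k')]
  congr 1
  funext ξ
  have : FT (k + k') (-ξ) = FT k (-ξ) + FT k' (-ξ) := by simp [FT]
  rw [this]; ring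

lemma S_smul_left (α : ℝ) (r : ℝ) (g k : 𝓢(Plane, ℂ)) :
    S α (r • g) k = r • S α g k := by
  rw [S, S, ← integral_smul]
  congr 1
  funext ξ
  have : FT (r • g) ξ = r • FT g ξ := by simp [FT]
  rw [this]
  simp only [smul_eq_mul, real_smul]
  push_cast
  ring

lemma S_smul_right (α : ℝ) (r : ℝ) (g k : 𝓢(Plane, ℂ)) :
    S α g (r • k) = r • S α g k := by
  rw [S, S, ← integral_smul]
  congr 1
  funext ξ
  have : FT (r • k) (-ξ) = r • FT k (-ξ) := by simp [FT]
  rw [this]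
  simp only [smul_eq_mul, real_smul]
  push_cast
  ring

lemma S_norm_le (α : ℝ) (g k : 𝓢(Plane, ℂ)) :
    ‖S α g k‖ ≤ (∫ ξ, ‖FT g ξ‖) * SchwartzMap.seminorm ℝ 0 0 (FT k) := by
  refine (norm_integral_le_integral_norm _).trans ?_
  have hmono : ∫ ξ, ‖(mB α ξ * FT g ξ) * FT k (-ξ)‖ ≤
      ∫ ξ, ‖FT g ξ‖ * SchwartzMap.seminorm ℝ 0 0 (FT k) := by
    refine integral_mono_of_nonneg (Filter.Eventually.of_forall fun ξ => norm_nonneg _)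
      ((FT g).integrable.norm.mul_const _) (Filter.Eventually.of_forall fun ξ => ?_)
    simp only []
    rw [norm_mul, norm_mul]
    calc ‖mB α ξ‖ * ‖FT g ξ‖ * ‖FT k (-ξ)‖
        ≤ 1 * ‖FT g ξ‖ * SchwartzMap.seminorm ℝ 0 0 (FT k) := by
          refine mul_le_mul (mul_le_mul_of_nonneg_right (mB_norm_le_one α ξ) (norm_nonneg _))
            (SchwartzMap.norm_le_seminorm ℝ (FT k) (-ξ)) (norm_nonneg _) ?_
          positivity
      _ = ‖FT g ξ‖ * SchwartzMap.seminorm ℝ 0 0 (FT k) := by ring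
  refine hmono.trans ?_
  rw [integral_mul_const]

end Helper

namespace Helper

variable {γ : Type*} {l : Filter γ}

lemma N1_le (f : 𝓢(Plane, ℂ)) :
    ∫ ξ, ‖f ξ‖ ≤ (∫ x : Plane, (1 + ‖x‖) ^ (-(3:ℝ))) *
      (2 ^ 3 * (Finset.Iic ((3:ℕ),(0:ℕ))).sup (fun m => SchwartzMap.seminorm ℝ m.1 m.2) f) := by
  have hdim : (Module.finrank ℝ Plane : ℝ) < 3 := by
    simp [finrank_euclideanSpace]
    norm_num
  have hint : Integrable (fun x : Plane => (1 + ‖x‖) ^ (-(3:ℝ))) :=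
    integrable_one_add_norm hdim
  set D : ℝ := 2 ^ 3 * (Finset.Iic ((3:ℕ),(0:ℕ))).sup (fun m => SchwartzMap.seminorm ℝ m.1 m.2) f
    with hD
  have hD0 : 0 ≤ D := by
    rw [hD]
    have := apply_nonneg ((Finset.Iic ((3:ℕ),(0:ℕ))).sup
      (fun m : ℕ × ℕ => SchwartzMap.seminorm ℝ (E := Plane) (F := ℂ) m.1 m.2)) f
    positivity
  have hpt : ∀ x : Plane, ‖f x‖ ≤ (1 + ‖x‖) ^ (-(3:ℝ)) * D := by
    intro x
    have h1 : (1 + ‖x‖) ^ (3:ℕ) * ‖f x‖ ≤ D := by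
      simpa [norm_iteratedFDeriv_zero] using
        SchwartzMap.one_add_le_sup_seminorm_apply (𝕜 := ℝ) (m := ((3:ℕ),(0:ℕ)))
          (k := 3) (n := 0) le_rfl le_rfl f x
    have hpos : (0:ℝ) < (1 + ‖x‖) ^ (3:ℕ) := by positivity
    have hrw : (1 + ‖x‖) ^ (-(3:ℝ)) = ((1 + ‖x‖) ^ (3:ℕ))⁻¹ := by
      rw [← Real.rpow_natCast (1 + ‖x‖) 3, ← Real.rpow_neg (by positivity)]
      norm_num
    rw [hrw]
    calc ‖f x‖ = ((1 + ‖x‖) ^ (3:ℕ))⁻¹ * ((1 + ‖x‖) ^ (3:ℕ) * ‖f x‖) := by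
          field_simp
      _ ≤ ((1 + ‖x‖) ^ (3:ℕ))⁻¹ * D := by
          exact mul_le_mul_of_nonneg_left h1 (by positivity)
  calc ∫ ξ, ‖f ξ‖ ≤ ∫ ξ : Plane, (1 + ‖ξ‖) ^ (-(3:ℝ)) * D :=
        integral_mono_of_nonneg (Filter.Eventually.of_forall fun ξ => norm_nonneg _)
          (hint.mul_const D) (Filter.Eventually.of_forall hpt)
    _ = (∫ x : Plane, (1 + ‖x‖) ^ (-(3:ℝ))) * D := integral_mul_const _ _

lemma tendsto_N1_zero {X : γ → 𝓢(Plane, ℂ)} (h : Tendsto X l (𝓝 0)) :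
    Tendsto (fun i => ∫ ξ, ‖X i ξ‖) l (𝓝 0) := by
  have hsup : Tendsto (fun i =>
      (Finset.Iic ((3:ℕ),(0:ℕ))).sup (fun m => SchwartzMap.seminorm ℝ m.1 m.2) (X i)) l (𝓝 0) := by
    have hsum : Tendsto (fun i => ∑ j ∈ Finset.Iic ((3:ℕ),(0:ℕ)), sem j (X i)) l (𝓝 0) := by
      have := tendsto_finset_sum (Finset.Iic ((3:ℕ),(0:ℕ)))
        (fun j _ => (by simpa using tendsto_sem_zero h j :
          Tendsto (fun i => sem j (X i)) l (𝓝 0)))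
      simpa using this
    refine squeeze_zero (fun i => apply_nonneg _ _) (fun i => ?_) hsum
    refine Seminorm.finset_sup_apply_le (Finset.sum_nonneg fun j _ => apply_nonneg _ _)
      (fun j hj => ?_)
    exact Finset.single_le_sum (fun j _ => apply_nonneg (sem j) (X i)) hj
  have hb : Tendsto (fun i => (∫ x : Plane, (1 + ‖x‖) ^ (-(3:ℝ))) *
      (2 ^ 3 * (Finset.Iic ((3:ℕ),(0:ℕ))).sup (fun m => SchwartzMap.seminorm ℝ m.1 m.2) (X i)))
      l (𝓝 0) := by
    have := (hsup.const_mul (2 ^ 3 : ℝ)).const_mul (∫ x : Plane, (1 + ‖x‖) ^ (-(3:ℝ)))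
    simpa [mul_assoc] using this
  refine squeeze_zero (fun i => integral_nonneg fun ξ => norm_nonneg _) (fun i => N1_le (X i)) hb

lemma tendsto_S (α : ℝ) {G K : γ → 𝓢(Plane, ℂ)} {g₀ k₀ : 𝓢(Plane, ℂ)}
    (hG : Tendsto G l (𝓝 g₀)) (hK : Tendsto K l (𝓝 k₀)) :
    Tendsto (fun i => S α (G i) (K i)) l (𝓝 (S α g₀ k₀)) := by
  have hFTK : Tendsto (fun i => FT (K i)) l (𝓝 (FT k₀)) :=
    ((SchwartzMap.fourierTransformCLM ℝ).continuous.tendsto k₀).comp hK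
  have h1 : Tendsto (fun i => S α (G i - g₀) (K i)) l (𝓝 0) := by
    rw [tendsto_zero_iff_norm_tendsto_zero]
    have hb : Tendsto (fun i => (∫ ξ, ‖FT (G i - g₀) ξ‖) *
        SchwartzMap.seminorm ℝ 0 0 (FT (K i))) l (𝓝 (0 * SchwartzMap.seminorm ℝ 0 0 (FT k₀))) := by
      refine Tendsto.mul ?_ ?_
      · refine tendsto_N1_zero ?_
        have hG0 : Tendsto (fun i => G i - g₀) l (𝓝 0) := by
          simpa using hG.sub (tendsto_const_nhds (x := g₀))
        have : Tendsto (fun i => FT (G i - g₀)) l (𝓝 (FT 0)) :=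
          ((SchwartzMap.fourierTransformCLM ℝ).continuous.tendsto 0).comp hG0
        simpa [FT, map_zero] using this
      · exact tendsto_sem hFTK (0, 0)
    rw [zero_mul] at hb
    exact squeeze_zero (fun i => norm_nonneg _) (fun i => S_norm_le α _ _) hb
  have h2 : Tendsto (fun i => S α g₀ (K i - k₀)) l (𝓝 0) := by
    rw [tendsto_zero_iff_norm_tendsto_zero]
    have hb : Tendsto (fun i => (∫ ξ, ‖FT g₀ ξ‖) *
        SchwartzMap.seminorm ℝ 0 0 (FT (K i - k₀))) l (𝓝 ((∫ ξ, ‖FT g₀ ξ‖) * 0)) := by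
      refine Tendsto.const_mul _ ?_
      have : ∀ i, FT (K i - k₀) = FT (K i) - FT k₀ := fun i => by simp [FT, -SchwartzMap.fourierTransformCLM_apply]
      simp only [this]
      exact tendsto_sem_zero hFTK (0, 0)
    rw [mul_zero] at hb
    exact squeeze_zero (fun i => norm_nonneg _) (fun i => S_norm_le α _ _) hb
  have heq : (fun i => S α (G i) (K i)) =
      fun i => (S α (G i - g₀) (K i) + S α g₀ (K i - k₀)) + S α g₀ k₀ := by
    funext i
    rw [S_sub_left, S_sub_right]
    ring
  rw [heq]
  have := (h1.add h2).add (tendsto_const_nhds (x := S α g₀ k₀))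
  simpa using this

end Helper

namespace Helper

lemma mult_formula {p k : Plane → ℂ} (hp : Integrable p) (hk : Integrable k) :
    ∫ x, 𝓕⁻ p x * k x = ∫ ξ, p ξ * 𝓕⁻ k ξ := by
  have hL : Continuous fun q : Plane × Plane => (-(innerₗ Plane)) q.1 q.2 := by
    have : (fun q : Plane × Plane => (-(innerₗ Plane)) q.1 q.2) =
        fun q : Plane × Plane => -(inner ℝ q.1 q.2 : ℝ) := by
      funext q; simp
    rw [this]
    exact continuous_inner.neg
  have hflip : (-(innerₗ Plane)).flip = -(innerₗ Plane) := by
    ext x y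
    simp [real_inner_comm]
  have h := VectorFourier.integral_fourierIntegral_smul_eq_flip (F := ℂ)
    (e := Real.fourierChar) (μ := (volume : Measure Plane)) (ν := (volume : Measure Plane))
    (L := -(innerₗ Plane)) Real.continuous_fourierChar hL hp hk
  rw [hflip] at h
  simpa [smul_eq_mul, FourierTransformInv.fourierInv] using h

lemma integral_mult_eq (α : ℝ) (g k : 𝓢(Plane, ℂ)) :
    ∫ x, mult (mB α) (⇑g) x * k x = S α g k := by
  have hp : Integrable (fun ξ => mB α ξ * 𝓕 (⇑g : Plane → ℂ) ξ) := by
    rw [← FT_coe]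
    exact Integrable.bdd_mul (c := 1) (FT g).integrable (mB_cont α).aestronglyMeasurable
      (Filter.Eventually.of_forall (mB_norm_le_one α))
  have h := mult_formula hp k.integrable
  rw [mult]
  rw [h, S]
  congr 1
  funext ξ
  rw [Real.fourierInv_eq_fourier_neg, ← FT_coe, ← FT_coe]

lemma S_symm (α : ℝ) (g k : 𝓢(Plane, ℂ)) : S α g k = S α k g := by
  rw [S, S]
  rw [← integral_neg_eq_self (fun ξ => (mB α ξ * FT g ξ) * FT k (-ξ)) volume]
  congr 1
  funext ξ
  rw [mB_neg, neg_neg]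
  ring

lemma fourier_conj (f : Plane → ℂ) (ξ : Plane) :
    (starRingEnd ℂ) (𝓕 f ξ) =
      𝓕 (fun x => (starRingEnd ℂ) (f x)) (-ξ) := by
  rw [Real.fourier_eq', Real.fourier_eq', ← integral_conj]
  congr 1
  funext v
  rw [smul_eq_mul, smul_eq_mul, map_mul]
  congr 1
  rw [← Complex.exp_conj]
  congr 1
  rw [map_mul, Complex.conj_I, Complex.conj_ofReal, inner_neg_right]
  push_cast
  ring

lemma S_conj (α : ℝ) {g k k' : 𝓢(Plane, ℂ)} (hg : ∀ x, (starRingEnd ℂ) (g x) = g x)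
    (hk' : ∀ x, k' x = (starRingEnd ℂ) (k x)) :
    S α g k' = (starRingEnd ℂ) (S α g k) := by
  have hgconj : ∀ ξ, (starRingEnd ℂ) (FT g ξ) = FT g (-ξ) := by
    intro ξ
    rw [FT_coe, fourier_conj]
    congr 1
    rw [show (fun x => (starRingEnd ℂ) (g x)) = ⇑g from funext hg]
  have hkconj : ∀ ξ, FT k' ξ = (starRingEnd ℂ) (FT k (-ξ)) := by
    intro ξ
    rw [FT_coe, FT_coe, fourier_conj, neg_neg]
    congr 1
    rw [show (fun x => (starRingEnd ℂ) (k x)) = ⇑k' from funext fun x => (hk' x).symm]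
  rw [S, S, ← integral_conj,
    ← integral_neg_eq_self (fun ξ => (mB α ξ * FT g ξ) * FT k' (-ξ)) volume]
  congr 1
  funext ξ
  rw [map_mul, map_mul, mB_conj, mB_neg, hgconj, hkconj, neg_neg]

end Helper

open Helper

theorem stmt9 (α : ℝ) (hα : 0 < α) (I : Set ℝ) (hIopen : IsOpen I) (hIconn : I.OrdConnected)
    (v v' : ℝ → 𝓢(Plane, ℂ))
    (hderiv : ∀ t ∈ I,
      Tendsto (fun h : ℝ => h⁻¹ • (v (t + h) - v t)) (𝓝[≠] 0) (𝓝 (v' t)))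
    (hcont : ContinuousOn v' I) :
    ∀ t ∈ I,
      HasDerivAt
        (fun s =>
          (∫ x, mult (mB α) (fun y => ((‖v s y‖ ^ 2 : ℝ) : ℂ)) x * ((‖v s x‖ ^ 2 : ℝ) : ℂ)).re)
        (4 * (∫ x, mult (mB α) (fun y => ((‖v t y‖ ^ 2 : ℝ) : ℂ)) x * v t x *
          (starRingEnd ℂ) (v' t x)).re) t := by
  intro t ht
  have hsq : ∀ (w : 𝓢(Plane, ℂ)) (y : Plane), ((‖w y‖ ^ 2 : ℝ) : ℂ) = P w w y := by
    intro w y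
    rw [P_apply, Complex.mul_conj]
    congr 1
    rw [Complex.normSq_eq_norm_sq]
  have hfun : ∀ s, (fun y => ((‖v s y‖ ^ 2 : ℝ) : ℂ)) = ⇑(P (v s) (v s)) :=
    fun s => funext fun y => hsq (v s) y
  -- rewrite the function whose derivative we compute
  have hF : ∀ s, (∫ x, mult (mB α) (fun y => ((‖v s y‖ ^ 2 : ℝ) : ℂ)) x *
      ((‖v s x‖ ^ 2 : ℝ) : ℂ)) = S α (P (v s) (v s)) (P (v s) (v s)) := by
    intro s
    rw [hfun s]
    rw [show (fun x => mult (mB α) (⇑(P (v s) (v s))) x * ((‖v s x‖ ^ 2 : ℝ) : ℂ)) =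
      (fun x => mult (mB α) (⇑(P (v s) (v s))) x * (P (v s) (v s)) x) from
      funext fun x => by rw [hsq (v s) x]]
    exact integral_mult_eq α (P (v s) (v s)) (P (v s) (v s))
  -- rewrite the claimed derivative
  have hD : (∫ x, mult (mB α) (fun y => ((‖v t y‖ ^ 2 : ℝ) : ℂ)) x * v t x *
      (starRingEnd ℂ) (v' t x)) = S α (P (v t) (v t)) (P (v t) (v' t)) := by
    rw [hfun t]
    rw [show (fun x => mult (mB α) (⇑(P (v t) (v t))) x * v t x * (starRingEnd ℂ) (v' t x)) =
      (fun x => mult (mB α) (⇑(P (v t) (v t))) x * (P (v t) (v' t)) x) from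
      funext fun x => by rw [P_apply]; ring]
    exact integral_mult_eq α (P (v t) (v t)) (P (v t) (v' t))
  simp only [hF, hD]
  rw [hasDerivAt_iff_tendsto_slope_zero]
  set l := (𝓝[≠] (0:ℝ))
  set a : ℝ → 𝓢(Plane, ℂ) := fun h => h⁻¹ • (v (t + h) - v t) with ha
  set f : 𝓢(Plane, ℂ) := P (v t) (v t) with hfdef
  set w : ℝ → 𝓢(Plane, ℂ) := fun h => P (a h) (v (t + h)) + P (v t) (a h) with hwdef
  have hA : Tendsto a l (𝓝 (v' t)) := hderiv t ht
  have hB : Tendsto (fun h => v (t + h)) l (𝓝 (v t)) := by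
    have hvs : ∀ h : ℝ, v (t + h) = v t + h • a h := by
      intro h
      by_cases hh : h = 0
      · simp [hh, ha]
      · rw [ha]
        simp only []
        rw [smul_smul, mul_inv_cancel₀ hh, one_smul]
        abel
    have h0 : Tendsto (fun h : ℝ => h) l (𝓝 0) := tendsto_id.mono_left nhdsWithin_le_nhds
    have : Tendsto (fun h => v t + h • a h) l (𝓝 (v t + (0:ℝ) • v' t)) :=
      tendsto_const_nhds.add (h0.smul hA)
    simp only [zero_smul, add_zero] at this
    simpa only [← hvs] using this
  -- the slope equals an S-expression
  have hslope : ∀ h : ℝ, h⁻¹ • ((S α (P (v (t+h)) (v (t+h))) (P (v (t+h)) (v (t+h)))).re -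
      (S α f f).re) = (S α (w h) (P (v (t+h)) (v (t+h))) + S α f (w h)).re := by
    intro h
    set gh : 𝓢(Plane, ℂ) := P (v (t+h)) (v (t+h)) with hgh
    have step2 : gh - f = P (v (t+h) - v t) (v (t+h)) + P (v t) (v (t+h) - v t) := by
      rw [P_sub_left, P_sub_right]
      abel
    have step3 : h⁻¹ • (gh - f) = w h := by
      rw [step2, smul_add, ← P_smul_left, ← P_smul_right]
    have step1 : S α gh gh - S α f f = S α (gh - f) gh + S α f (gh - f) := by
      rw [S_sub_left, S_sub_right]
      ring
    calc h⁻¹ • ((S α gh gh).re - (S α f f).re)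
        = (h⁻¹ • (S α gh gh - S α f f)).re := by
          rw [Complex.smul_re, Complex.sub_re]
      _ = (S α (h⁻¹ • (gh - f)) gh + S α f (h⁻¹ • (gh - f))).re := by
          rw [step1, S_smul_left, S_smul_right, smul_add]
      _ = (S α (w h) gh + S α f (w h)).re := by rw [step3]
  -- limits
  set W : 𝓢(Plane, ℂ) := P (v' t) (v t) + P (v t) (v' t) with hW
  have hw : Tendsto w l (𝓝 W) :=
    (tendsto_P hA hB).add (tendsto_P tendsto_const_nhds hA)
  have hg : Tendsto (fun h => P (v (t+h)) (v (t+h))) l (𝓝 f) := tendsto_P hB hB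
  have hS : Tendsto (fun h => S α (w h) (P (v (t+h)) (v (t+h))) + S α f (w h)) l
      (𝓝 (S α W f + S α f W)) :=
    (tendsto_S α hw hg).add (tendsto_S α tendsto_const_nhds hw)
  have hSre : Tendsto (fun h => (S α (w h) (P (v (t+h)) (v (t+h))) + S α f (w h)).re) l
      (𝓝 ((S α W f + S α f W).re)) :=
    (Complex.continuous_re.tendsto _).comp hS
  -- identify the limit
  have hfinal : (S α W f + S α f W).re = 4 * (S α f (P (v t) (v' t))).re := by
    have h1 : S α W f = S α f W := S_symm α W f
    have h2 : S α f W = S α f (P (v' t) (v t)) + S α f (P (v t) (v' t)) := S_add_right α f _ _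
    have h3 : S α f (P (v' t) (v t)) = (starRingEnd ℂ) (S α f (P (v t) (v' t))) := by
      refine S_conj α (fun x => ?_) (fun x => ?_)
      · simp only [hfdef, P_apply, map_mul, Complex.conj_conj]
        ring
      · simp only [P_apply, map_mul, Complex.conj_conj]
        ring
    rw [h1, h2, h3]
    simp [Complex.add_re, Complex.conj_re]
    ring
  rw [hfinal] at hSre
  refine hSre.congr fun h => ?_
  rw [← hslope h]
end
end

section
/- Let ν > 0 and let S, X : ℝ² → ℝ be Schwartz functions which are both symmetric under the coordinate exchange (ξ₁, ξ₂) ↦ (ξ₂, ξ₁), and which satisfy ∂²_{ξ₁}X + ν ∂²_{ξ₂}X = ∂²_{ξ₁}(S²) on ℝ². Then ∫_{ℝ²} S² ΔX dξ₁ dξ₂ = − (1/(1+ν)) ∫_{ℝ²} |∇(S²)|² dξ₁ dξ₂. -/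
noncomputable section
open MeasureTheory SchwartzMap
open scoped ENNReal

/-- The partial derivative in the `i`-th coordinate direction. -/
def pdR (i : Fin 2) (f : Plane → ℝ) : Plane → ℝ :=
  fun x => fderiv ℝ f x (EuclideanSpace.single i 1)

/-- The Laplacian `Δ = ∂²_{ξ₁} + ∂²_{ξ₂}`. -/
def lapR (f : Plane → ℝ) : Plane → ℝ :=
  fun x => pdR 0 (pdR 0 f) x + pdR 1 (pdR 1 f) x

/-- The coordinate exchange `(ξ₁, ξ₂) ↦ (ξ₂, ξ₁)` on `ℝ²`. -/
def swap12 : Plane → Plane :=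
  fun x => (EuclideanSpace.equiv (Fin 2) ℝ).symm ![x 1, x 0]

/-! ### Auxiliary lemmas -/

lemma schwartz_tempGrowth (f : 𝓢(Plane, ℝ)) : Function.HasTemperateGrowth ⇑f := by
  refine ⟨f.smooth ⊤, fun n => ?_⟩
  obtain ⟨C, hC⟩ := f.decay' 0 n
  exact ⟨0, C, fun x => by
    have h := hC x; simp only [pow_zero, one_mul] at h; simp only [pow_zero, mul_one]; exact h⟩

/-- Pointwise product of Schwartz functions, as a Schwartz function. -/
def smul2 (F G : 𝓢(Plane, ℝ)) : 𝓢(Plane, ℝ) :=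
  bilinLeftCLM (ContinuousLinearMap.mul ℝ ℝ) (schwartz_tempGrowth G) F

lemma smul2_apply (F G : 𝓢(Plane, ℝ)) (x : Plane) : smul2 F G x = F x * G x := rfl

lemma integrable_mul (F G : 𝓢(Plane, ℝ)) :
    Integrable (fun x => F x * G x) (volume : Measure Plane) :=
  (smul2 F G).integrable

/-- Partial derivative of a Schwartz function, as a Schwartz function. -/
def pd (i : Fin 2) (F : 𝓢(Plane, ℝ)) : 𝓢(Plane, ℝ) :=
  LineDeriv.lineDerivOp (EuclideanSpace.single i (1:ℝ)) F

lemma pd_eq (i : Fin 2) (F : 𝓢(Plane, ℝ)) : pdR i ⇑F = ⇑(pd i F) := by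
  funext x
  simp [pdR, pd, SchwartzMap.lineDerivOp_apply_eq_fderiv]

/-- The coordinate swap as a continuous linear map. -/
def swapCLM : Plane →L[ℝ] Plane :=
  LinearMap.toContinuousLinearMap
    ((WithLp.linearEquiv 2 ℝ (Fin 2 → ℝ)).symm.toLinearMap ∘ₗ
      (LinearMap.funLeft ℝ ℝ (Equiv.swap (0 : Fin 2) 1)) ∘ₗ
      (WithLp.linearEquiv 2 ℝ (Fin 2 → ℝ)).toLinearMap : Plane →ₗ[ℝ] Plane)

lemma swapCLM_apply (x : Plane) (i : Fin 2) : swapCLM x i = x (Equiv.swap (0 : Fin 2) 1 i) := rfl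

lemma swap12_eq : swap12 = ⇑swapCLM := by
  funext x
  ext i
  fin_cases i <;> simp [swap12, swapCLM_apply, Equiv.swap_apply_def]

lemma swapCLM_swapCLM (x : Plane) : swapCLM (swapCLM x) = x := by
  ext i
  fin_cases i <;> simp [swapCLM_apply, Equiv.swap_apply_def]

lemma swapCLM_single0 : swapCLM (EuclideanSpace.single (0 : Fin 2) (1:ℝ)) = EuclideanSpace.single 1 1 := by
  ext i
  fin_cases i <;> simp [swapCLM_apply, EuclideanSpace.single_apply, Equiv.swap_apply_def]

lemma swapCLM_single1 : swapCLM (EuclideanSpace.single (1 : Fin 2) (1:ℝ)) = EuclideanSpace.single 0 1 := by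
  ext i
  fin_cases i <;> simp [swapCLM_apply, EuclideanSpace.single_apply, Equiv.swap_apply_def]

lemma pd_comp_swap (f : Plane → ℝ) (hf : Differentiable ℝ f) {i j : Fin 2}
    (hij : swapCLM (EuclideanSpace.single i (1:ℝ)) = EuclideanSpace.single j 1) (x : Plane) :
    pdR i (f ∘ ⇑swapCLM) x = pdR j f (swapCLM x) := by
  unfold pdR
  rw [fderiv_comp x (hf _) swapCLM.differentiableAt]
  simp [swapCLM.fderiv, hij]

lemma pd_symm (f : 𝓢(Plane, ℝ)) (hsym : ∀ x, f (swap12 x) = f x) {i j : Fin 2}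
    (hij : swapCLM (EuclideanSpace.single i (1:ℝ)) = EuclideanSpace.single j 1) (x : Plane) :
    pdR i ⇑f x = pdR j ⇑f (swapCLM x) := by
  have h : ⇑f ∘ ⇑swapCLM = ⇑f := by
    funext y
    have := hsym y
    rw [swap12_eq] at this
    exact this
  conv_lhs => rw [← h]
  exact pd_comp_swap ⇑f f.differentiable hij x

lemma pd2_symm (f : 𝓢(Plane, ℝ)) (hsym : ∀ x, f (swap12 x) = f x) {i j : Fin 2}
    (hij : swapCLM (EuclideanSpace.single i (1:ℝ)) = EuclideanSpace.single j 1) (x : Plane) :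
    pdR i (pdR i ⇑f) (swapCLM x) = pdR j (pdR j ⇑f) x := by
  have h1 : pdR i ⇑f = (pdR j ⇑f) ∘ ⇑swapCLM := by
    funext y
    exact pd_symm f hsym hij y
  rw [h1, pd_comp_swap (pdR j ⇑f) (by rw [pd_eq]; exact (pd j f).differentiable) hij,
    swapCLM_swapCLM]

theorem stmt11 (ν : ℝ) (hν : 0 < ν) (S X : 𝓢(Plane, ℝ))
    (hSsym : ∀ x, S (swap12 x) = S x) (hXsym : ∀ x, X (swap12 x) = X x)
    (hPDE : ∀ x, pdR 0 (pdR 0 ⇑X) x + ν * pdR 1 (pdR 1 ⇑X) x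
      = pdR 0 (pdR 0 (fun y => S y ^ 2)) x) :
    ∫ x, S x ^ 2 * lapR ⇑X x =
      -(1 / (1 + ν)) *
        ∫ x, (pdR 0 (fun y => S y ^ 2) x ^ 2 + pdR 1 (fun y => S y ^ 2) x ^ 2) := by
  have hν1 : (1 : ℝ) + ν ≠ 0 := by positivity
  set Q : 𝓢(Plane, ℝ) := smul2 S S with hQdef
  have hQcoe : (fun y => S y ^ 2) = ⇑Q := by
    funext y; rw [sq]; rfl
  have hQx : ∀ y, S y ^ 2 = Q y := fun y => by rw [sq]; rfl
  have hQsym : ∀ x, Q (swap12 x) = Q x := by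
    intro x
    simp only [hQdef, smul2_apply, hSsym x]
  rw [hQcoe] at hPDE ⊢
  -- pointwise identity : (1+ν) * lapR X = lapR Q
  have hlap : ∀ x, lapR ⇑X x = (1 + ν)⁻¹ * lapR ⇑Q x := by
    intro x
    have h1 := hPDE x
    have h2 := hPDE (swapCLM x)
    rw [pd2_symm X hXsym swapCLM_single0 x, pd2_symm X hXsym swapCLM_single1 x,
      pd2_symm Q hQsym swapCLM_single0 x] at h2
    unfold lapR
    rw [inv_mul_eq_div, eq_div_iff hν1]
    linarith
  -- integration by parts for each direction (everything is definitionally a Schwartz product)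
  have ibp : ∀ i : Fin 2, ∫ x, Q x * pdR i (pdR i ⇑Q) x
      = -∫ x, pdR i ⇑Q x * pdR i ⇑Q x := by
    intro i
    exact integral_mul_fderiv_eq_neg_fderiv_mul_of_integrable
      (f := ⇑Q) (g := ⇑(pd i Q)) (v := EuclideanSpace.single i 1)
      (integrable_mul (pd i Q) (pd i Q)) (integrable_mul Q (pd i (pd i Q)))
      (integrable_mul Q (pd i Q)) (fun x _ => Q.differentiableAt)
      (fun x _ => (pd i Q).differentiableAt)
  have hint : ∀ i : Fin 2,
      Integrable (fun x => Q x * pdR i (pdR i ⇑Q) x) (volume : Measure Plane) :=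
    fun i => integrable_mul Q (pd i (pd i Q))
  have hsq : ∀ i : Fin 2,
      Integrable (fun x => pdR i ⇑Q x ^ 2) (volume : Measure Plane) := by
    intro i
    simp only [pow_two]
    exact integrable_mul (pd i Q) (pd i Q)
  calc ∫ x, S x ^ 2 * lapR ⇑X x
      = ∫ x, (1 + ν)⁻¹ * (Q x * lapR ⇑Q x) :=
        integral_congr_ae (.of_forall fun x => by beta_reduce; rw [hQx x, hlap x]; ring)
    _ = (1 + ν)⁻¹ * ∫ x, Q x * lapR ⇑Q x := integral_const_mul _ _
    _ = (1 + ν)⁻¹ * ∫ x, (Q x * pdR 0 (pdR 0 ⇑Q) x + Q x * pdR 1 (pdR 1 ⇑Q) x) := by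
        congr 1
        refine integral_congr_ae (.of_forall fun x => ?_)
        beta_reduce
        unfold lapR
        ring
    _ = (1 + ν)⁻¹ * ((∫ x, Q x * pdR 0 (pdR 0 ⇑Q) x) + ∫ x, Q x * pdR 1 (pdR 1 ⇑Q) x) := by
        rw [integral_add (hint 0) (hint 1)]
    _ = (1 + ν)⁻¹ * ((-∫ x, pdR 0 ⇑Q x * pdR 0 ⇑Q x) + -∫ x, pdR 1 ⇑Q x * pdR 1 ⇑Q x) := by
        rw [ibp 0, ibp 1]
    _ = (1 + ν)⁻¹ * ((-∫ x, pdR 0 ⇑Q x ^ 2) + -∫ x, pdR 1 ⇑Q x ^ 2) := by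
        simp only [pow_two]
    _ = -(1 / (1 + ν)) * ∫ x, (pdR 0 ⇑Q x ^ 2 + pdR 1 ⇑Q x ^ 2) := by
        rw [integral_add (hsq 0) (hsq 1)]; field_simp; ring
end
end
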